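/- Let X ⊆ ℝⁿ be closed and nonempty and let p, q ∈ ℝⁿ with p ∉ M_X, d(p, M_X) > δ > 0, ‖p − q‖ = ε < δ, and ⟨p − q, p − m(p)⟩ = 0. Then every closest point of q lies in B(q, √(r² + ε²)) \ B(p_δ, δ + r), where r = ‖p − m(p)‖ and p_δ = p + δ(p − m(p))/r (for p ∉ X). -/

import Mathlib

set_option maxHeartbeats 1000000

open Metric Set Filter

noncomputable section

abbrev E (n : ℕ) := EuclideanSpace ℝ (Fin n)

/-- The set of closest points of `X` to `a`. -/
def mSet {n : ℕ} (X : Set (E n)) (a : E n) : Set (E n) :=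
  {x ∈ X | dist a x = Metric.infDist a X}

/-- The medial axis: points with more than one closest point in `X`. -/
def medialAxis {n : ℕ} (X : Set (E n)) : Set (E n) :=
  {a | ∃ x ∈ mSet X a, ∃ y ∈ mSet X a, x ≠ y}

variable {n : ℕ}

lemma mSet_nonempty (X : Set (E n)) (hX : IsClosed X) (hne : X.Nonempty) (c : E n) :
    (mSet X c).Nonempty := by
  obtain ⟨y, hy, hyd⟩ := hX.exists_infDist_eq_dist hne c
  exact ⟨y, hy, hyd.symm⟩

/-- A choice of nearest point. -/
def nearest (X : Set (E n)) (hX : IsClosed X) (hne : X.Nonempty) (c : E n) : E n :=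
  (mSet_nonempty X hX hne c).choose

lemma nearest_mem_mSet (X : Set (E n)) (hX : IsClosed X) (hne : X.Nonempty) (c : E n) :
    nearest X hX hne c ∈ mSet X c :=
  (mSet_nonempty X hX hne c).choose_spec

lemma nearest_mem (X : Set (E n)) (hX : IsClosed X) (hne : X.Nonempty) (c : E n) :
    nearest X hX hne c ∈ X := (nearest_mem_mSet X hX hne c).1

lemma dist_nearest (X : Set (E n)) (hX : IsClosed X) (hne : X.Nonempty) (c : E n) :
    dist c (nearest X hX hne c) = infDist c X := (nearest_mem_mSet X hX hne c).2

lemma nearest_unique {X : Set (E n)} {hX : IsClosed X} {hne : X.Nonempty} {c : E n}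
    (hc : c ∉ medialAxis X) {z : E n} (hz : z ∈ mSet X c) : z = nearest X hX hne c := by
  by_contra h
  exact hc ⟨z, hz, nearest X hX hne c, nearest_mem_mSet X hX hne c, h⟩

lemma nearest_continuousOn (X : Set (E n)) (hX : IsClosed X) (hne : X.Nonempty)
    (p : E n) (δ : ℝ) (hball : Metric.ball p δ ∩ medialAxis X = ∅) :
    ContinuousOn (nearest X hX hne) (Metric.ball p δ) := by
  intro c hc
  have hcM : c ∉ medialAxis X := by
    intro h
    exact absurd (Set.mem_inter hc h) (by simp [hball])
  rw [Metric.continuousWithinAt_iff]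
  intro ε hε
  set N := nearest X hX hne c with hN
  set R := infDist c X with hR
  set A := (X ∩ closedBall c (R + 2)) \ ball N ε with hA
  have hAcomp : IsCompact A := by
    apply (isCompact_closedBall c (R + 2)).of_isClosed_subset
    · exact ((hX.inter Metric.isClosed_closedBall).sdiff isOpen_ball)
    · exact fun y hy => hy.1.2
  -- gap
  have hgap : ∃ g > 0, ∀ z ∈ A, R + g ≤ dist c z := by
    rcases A.eq_empty_or_nonempty with hAe | hAne
    · exact ⟨1, one_pos, fun z hz => absurd (hAe ▸ hz) (Set.notMem_empty z)⟩
    · obtain ⟨z₀, hz₀, hmin⟩ := hAcomp.exists_isMinOn hAne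
        ((continuous_const.dist continuous_id : Continuous fun z : E n => dist c z)).continuousOn
      refine ⟨dist c z₀ - R, ?_, fun z hz => by
        have h5 := hmin hz; simp only [Set.mem_setOf_eq] at h5; linarith⟩
      have h1 : R ≤ dist c z₀ := infDist_le_dist_of_mem hz₀.1.1
      rcases h1.lt_or_eq with h | h
      · linarith
      · exfalso
        have : z₀ = N := nearest_unique hcM ⟨hz₀.1.1, h.symm⟩
        have : z₀ ∈ ball N ε := by rw [this]; simpa using hε
        exact hz₀.2 this
  obtain ⟨g, hg, hgap⟩ := hgap
  refine ⟨min 1 (g / 3), by positivity, fun c' _ hd => ?_⟩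
  set z' := nearest X hX hne c' with hz'
  have hdc : dist c c' < min 1 (g / 3) := by rwa [dist_comm]
  have h1 : dist c z' ≤ R + 2 * dist c c' := by
    have h2 : dist c z' ≤ dist c c' + dist c' z' := dist_triangle _ _ _
    have h3 : dist c' z' = infDist c' X := dist_nearest X hX hne c'
    have h4 : infDist c' X ≤ infDist c X + dist c' c := infDist_le_infDist_add_dist
    rw [dist_comm c' c] at h4
    linarith
  have hz'X : z' ∈ X := nearest_mem X hX hne c'
  have hz'ball : z' ∈ closedBall c (R + 2) := by
    rw [mem_closedBall, dist_comm]
    have : dist c c' < 1 := lt_of_lt_of_le hdc (min_le_left _ _)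
    linarith
  by_contra hcon
  have hzA : z' ∈ A := ⟨⟨hz'X, hz'ball⟩, by
    simp only [mem_ball, not_lt] at hcon ⊢
    simpa [dist_comm] using hcon⟩
  have := hgap z' hzA
  have : dist c c' < g / 3 := lt_of_lt_of_le hdc (min_le_right _ _)
  linarith [hgap z' hzA, h1]

lemma growth (X : Set (E n)) (hX : IsClosed X) (hne : X.Nonempty)
    (p x : E n) (hxX : x ∈ X) (hxd : dist p x = infDist p X) (hr : 0 < dist p x)
    (δ : ℝ) (hball : Metric.ball p δ ∩ medialAxis X = ∅)
    (t : ℝ) (ht0 : 0 < t) (htδ : t < δ) :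
    dist p x + t ≤ infDist (p + (t / dist p x) • (p - x)) X := by
  set r := dist p x with hrdef
  apply le_of_forall_pos_le_add
  intro η hη
  -- uniform continuity of the nearest point map on the closed ball of radius t
  have hK : closedBall p t ⊆ ball p δ := closedBall_subset_ball htδ
  have hcont := (nearest_continuousOn X hX hne p δ hball).mono hK
  have huc := (isCompact_closedBall p t).uniformContinuousOn_of_continuous hcont
  rw [Metric.uniformContinuousOn_iff] at huc
  set ε := min r (min (η * r / (2 * t)) (η ^ 2 * r ^ 2 / (8 * t ^ 2 * (r + t)))) with hεdef
  have hεr : ε ≤ r := min_le_left _ _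
  have hε1 : ε ≤ η * r / (2 * t) := le_trans (min_le_right _ _) (min_le_left _ _)
  have hε2 : ε ≤ η ^ 2 * r ^ 2 / (8 * t ^ 2 * (r + t)) :=
    le_trans (min_le_right _ _) (min_le_right _ _)
  have hεpos : 0 < ε := lt_min hr (lt_min (by positivity) (by positivity))
  obtain ⟨s₀, hs₀, hucs⟩ := huc ε hεpos
  -- the number of steps and step size
  set m : ℕ := max 1 ⌈2 * t / s₀⌉₊ with hmdef
  have hm1 : 1 ≤ m := le_max_left _ _
  have hmpos : (0:ℝ) < m := by exact_mod_cast Nat.lt_of_lt_of_le Nat.zero_lt_one hm1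
  set s : ℝ := t / m with hsdef
  have hs : 0 < s := by positivity
  have hms : (m:ℝ) * s = t := by rw [hsdef]; field_simp
  have hss₀ : s < s₀ := by
    have h1 : 2 * t / s₀ ≤ (m : ℝ) := le_trans (Nat.le_ceil _) (by exact_mod_cast le_max_right 1 _)
    have h2 : 2 * t ≤ (m:ℝ) * s₀ := by
      rw [div_le_iff₀ hs₀] at h1; linarith
    rw [hsdef, div_lt_iff₀ hmpos]
    linarith
  have hm1' : (1:ℝ) ≤ m := by exact_mod_cast hm1
  have hst : s ≤ t := by
    rw [hsdef, div_le_iff₀ hmpos]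
    exact le_mul_of_one_le_right ht0.le hm1'
  -- Euler iteration
  set F : E n → E n := fun c => c + (s / infDist c X) • (c - nearest X hX hne c) with hF
  set c : ℕ → E n := fun k => F^[k] p with hc
  have hsε : s * ε / r ≤ s := by
    rw [div_le_iff₀ hr]
    exact mul_le_mul_of_nonneg_left hεr hs.le
  have key : ∀ k : ℕ, k ≤ m → dist p (c k) ≤ k * s ∧
      r + k * (s - s * ε / r) ≤ infDist (c k) X := by
    intro k
    induction k with
    | zero =>
      intro _
      have hc0 : c 0 = p := by simp [hc]
      constructor
      · simp [hc0]
      · simp only [Nat.cast_zero, zero_mul, add_zero]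
        rw [hc0, ← hxd]
    | succ k ih =>
      intro hk1
      obtain ⟨ihd, ihh⟩ := ih (le_trans (Nat.le_succ k) hk1)
      have hkm : (k:ℝ) ≤ m := by exact_mod_cast le_trans (Nat.le_succ k) hk1
      have hk1m : ((k:ℝ) + 1) ≤ m := by exact_mod_cast hk1
      set cc := c k with hcc
      set h := infDist cc X with hh
      have hksn : 0 ≤ (k:ℝ) * (s - s * ε / r) := by
        apply mul_nonneg (Nat.cast_nonneg k); linarith
      have hhr : r ≤ h := by linarith [ihh]
      have hh0 : 0 < h := lt_of_lt_of_le hr hhr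
      set mk := nearest X hX hne cc with hmk
      have hmkX : mk ∈ X := nearest_mem X hX hne cc
      have hdm : dist cc mk = h := dist_nearest X hX hne cc
      have hstep : c (k+1) = cc + (s / h) • (cc - mk) := by
        show F^[k+1] p = _
        rw [Function.iterate_succ_apply']
      have hdccc' : dist cc (c (k+1)) = s := by
        rw [hstep, dist_self_add_right, norm_smul, Real.norm_eq_abs,
          abs_of_pos (by positivity), ← dist_eq_norm, hdm]
        field_simp
      have hdpk : dist p (c (k+1)) ≤ ((k:ℝ)+1) * s := by
        calc dist p (c (k+1)) ≤ dist p cc + dist cc (c (k+1)) := dist_triangle _ _ _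
        _ ≤ k * s + s := by rw [hdccc']; linarith
        _ = ((k:ℝ)+1) * s := by ring
      have hKcc : cc ∈ closedBall p t := by
        rw [mem_closedBall, dist_comm]
        calc dist p cc ≤ k * s := ihd
        _ ≤ (m:ℝ) * s := mul_le_mul_of_nonneg_right hkm hs.le
        _ = t := hms
      have hKcc' : c (k+1) ∈ closedBall p t := by
        rw [mem_closedBall, dist_comm]
        calc dist p (c (k+1)) ≤ ((k:ℝ)+1) * s := hdpk
        _ ≤ (m:ℝ) * s := mul_le_mul_of_nonneg_right hk1m hs.le
        _ = t := hms
      set z' := nearest X hX hne (c (k+1)) with hz'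
      have hz'X : z' ∈ X := nearest_mem X hX hne (c (k+1))
      have hdz' : dist (c (k+1)) z' = infDist (c (k+1)) X := dist_nearest X hX hne (c (k+1))
      have hnear : dist mk z' < ε := hucs cc hKcc (c (k+1)) hKcc' (by rw [hdccc']; exact hss₀)
      -- the core inequality
      set H := infDist (c (k+1)) X with hH
      have hHnn : 0 ≤ H := infDist_nonneg
      set I : ℝ := inner ℝ (cc - z') (cc - mk) with hI
      have hcore : h^2 + 2*s*(h - ε) + s^2 ≤ H^2 := by
        have hexp : c (k+1) - z' = (cc - z') + (s/h) • (cc - mk) := by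
          rw [hstep]; abel
        have hnmk : ‖cc - mk‖ = h := by rw [← dist_eq_norm, hdm]
        have hnormsq : H^2 = ‖cc - z'‖^2 + 2*((s/h) * I) + s^2 := by
          rw [← hdz', dist_eq_norm, hexp, norm_add_sq_real, real_inner_smul_right, norm_smul,
            Real.norm_eq_abs, abs_of_pos (show (0:ℝ) < s/h by positivity), hnmk, hI]
          have hfr : (s / h * h) ^ 2 = s ^ 2 := by
            field_simp
          rw [hfr]
        have hna : h ≤ ‖cc - z'‖ := by
          rw [← dist_eq_norm, hh]
          exact infDist_le_dist_of_mem hz'X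
        have hinner : h^2 - h*ε ≤ I := by
          have hsplit : I = inner ℝ (cc - mk) (cc - mk) + (inner ℝ (mk - z') (cc - mk) : ℝ) := by
            rw [hI, ← inner_add_left]
            congr 1
            abel
          have h1 : (inner ℝ (cc - mk) (cc - mk) : ℝ) = h^2 := by
            rw [real_inner_self_eq_norm_sq, hnmk]
          have h2 : -(h * ε) ≤ (inner ℝ (mk - z') (cc - mk) : ℝ) := by
            have hcs := abs_real_inner_le_norm (mk - z') (cc - mk)
            have hn1 : ‖mk - z'‖ ≤ ε := by rw [← dist_eq_norm]; exact le_of_lt hnear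
            rw [hnmk] at hcs
            have h3 : ‖mk - z'‖ * h ≤ ε * h := mul_le_mul_of_nonneg_right hn1 hh0.le
            have h4 := neg_abs_le (inner ℝ (mk - z') (cc - mk) : ℝ)
            have h5 : ε * h = h * ε := mul_comm _ _
            linarith
          rw [hsplit, h1]
          linarith
        have hmono : s*(h-ε) ≤ (s/h) * I := by
          have h6 : s * (h^2 - h*ε) ≤ s * I := mul_le_mul_of_nonneg_left hinner hs.le
          have h7 : (s/h) * I = (s * I) / h := by ring
          rw [h7, le_div_iff₀ hh0]
          calc s*(h-ε)*h = s * (h^2 - h*ε) := by ring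
          _ ≤ s * I := h6
        have hsq2 : h^2 ≤ ‖cc - z'‖^2 := by
          have := pow_le_pow_left₀ hh0.le hna 2
          linarith
        rw [hnormsq]
        linarith
      -- conclude the induction step
      refine ⟨by push_cast; exact hdpk, ?_⟩
      set d : ℝ := s*ε/r with hd
      have hd0 : 0 ≤ d := by positivity
      have hdr : d * r = s * ε := by rw [hd]; field_simp
      have haux : 0 ≤ h + s - d := by linarith
      have hsq : (h + s - d)^2 ≤ H^2 := by
        have e2 : 0 ≤ d * ((2*h - 2*r) + (2*s - d)) :=
          mul_nonneg hd0 (by linarith)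
        have expand : h^2 + 2*s*(h-ε) + s^2 - (h + s - d)^2
            = d*((2*h - 2*r) + (2*s - d)) + 2*(d*r - s*ε) := by ring
        have e3 : (h + s - d)^2 ≤ h^2 + 2*s*(h-ε) + s^2 := by linarith [e2, hdr, expand]
        linarith
      have hHge : h + s - d ≤ H := by
        have h1 : h + s - d = Real.sqrt ((h + s - d)^2) := (Real.sqrt_sq haux).symm
        have h2 : Real.sqrt ((h + s - d)^2) ≤ Real.sqrt (H^2) := Real.sqrt_le_sqrt hsq
        rw [Real.sqrt_sq hHnn] at h2
        linarith
      push_cast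
      have heq : r + ((k:ℝ) + 1) * (s - s * ε / r) = (r + (k:ℝ) * (s - s*ε/r)) + (s - d) := by
        rw [hd]; ring
      rw [heq]
      linarith [ihh]
  -- use the endpoint of the Euler polygon
  obtain ⟨hdm2, hhm⟩ := key m le_rfl
  set cn := c m with hcn
  have h1 : r + t - t*ε/r ≤ infDist cn X := by
    have : (m:ℝ) * (s - s*ε/r) = t - t*ε/r := by
      rw [mul_sub, hms]  -- m*s = t
      congr 1
      rw [mul_div_assoc, mul_div_assoc, ← mul_assoc, hms]
    linarith [hhm, this ▸ hhm]
  set pt := p + (t / r) • (p - x) with hpt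
  set e : ℝ := t * ε / r with hedef
  have he : e * r = t * ε := by rw [hedef]; field_simp
  have he0 : 0 ≤ e := by rw [hedef]; positivity
  have het : e ≤ t := by
    have h2 : t * ε ≤ t * r := mul_le_mul_of_nonneg_left hεr ht0.le
    have h3 : e * r ≤ t * r := by linarith [he]
    exact le_of_mul_le_mul_right h3 hr
  have h1' : r + t - e ≤ infDist cn X := h1
  have hwn : ‖cn - p‖ ≤ t := by
    rw [← dist_eq_norm, dist_comm]
    calc dist p cn ≤ (m:ℝ) * s := hdm2
    _ = t := hms
  have hwnn : 0 ≤ ‖cn - p‖ := norm_nonneg _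
  have hpxn : ‖p - x‖ = r := by rw [← dist_eq_norm]
  have hd3 : infDist cn X ≤ ‖cn - x‖ := by
    rw [← dist_eq_norm]
    exact infDist_le_dist_of_mem hxX
  have hlow : 0 ≤ r + t - e := by linarith
  have hsq1 : (r + t - e)^2 ≤ ‖cn - x‖^2 :=
    pow_le_pow_left₀ hlow (le_trans h1' hd3) 2
  have hexp : ‖cn - x‖^2 = ‖cn - p‖^2 + 2 * inner ℝ (cn - p) (p - x) + r^2 := by
    have hsplit : cn - x = (cn - p) + (p - x) := by abel
    rw [hsplit, norm_add_sq_real, hpxn]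
  have hw2 : ‖cn - p‖^2 ≤ t^2 := by
    have := pow_le_pow_left₀ hwnn hwn 2
    linarith
  have hinn : (r + t - e)^2 - t^2 - r^2 ≤ 2 * inner ℝ (cn - p) (p - x) := by
    rw [hexp] at hsq1
    linarith
  have hptn : ‖pt - cn‖^2 = t^2 - 2 * ((t/r) * inner ℝ (cn - p) (p - x)) + ‖cn - p‖^2 := by
    have hsplit : pt - cn = (t/r) • (p - x) - (cn - p) := by rw [hpt]; abel
    rw [hsplit, norm_sub_sq_real, real_inner_smul_left, norm_smul, Real.norm_eq_abs,
      abs_of_pos (show (0:ℝ) < t/r by positivity), hpxn]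
    have hfr : (t / r * r) ^ 2 = t ^ 2 := by field_simp
    rw [hfr, real_inner_comm (p - x) (cn - p)]
  have htr0 : (0:ℝ) ≤ t / r := by positivity
  have h9 : ‖pt - cn‖^2 ≤ 2*t^2 - (t/r) * ((r + t - e)^2 - t^2 - r^2) := by
    have h9a : (t/r) * ((r + t - e)^2 - t^2 - r^2) ≤ (t/r) * (2 * inner ℝ (cn - p) (p - x)) :=
      mul_le_mul_of_nonneg_left hinn htr0
    have h9b : (t/r) * (2 * inner ℝ (cn - p) (p - x)) = 2 * ((t/r) * inner ℝ (cn - p) (p - x)) := by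
      ring
    rw [hptn]
    linarith only [h9b ▸ h9a, hw2]
  have h10 : 2*t^2 - (t/r) * ((r + t - e)^2 - t^2 - r^2) = (t/r) * (2*(r+t)*e - e^2) := by
    have hrne : r ≠ 0 := ne_of_gt hr
    field_simp
    ring
  have h11 : (t/r) * (2*(r+t)*e - e^2) ≤ (t/r) * (2*(r+t)*e) :=
    mul_le_mul_of_nonneg_left (sub_le_self _ (sq_nonneg e)) htr0
  have h12 : (t/r) * (2*(r+t)*e) = 2*t^2*(r+t)*ε/r^2 := by
    have hrne : r ≠ 0 := ne_of_gt hr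
    rw [hedef]
    field_simp
  have h13 : 2*t^2*(r+t)*ε/r^2 ≤ (η/2)^2 := by
    rw [div_le_iff₀ (show (0:ℝ) < r^2 by positivity)]
    have hBpos : (0:ℝ) < 8 * t ^ 2 * (r + t) := by positivity
    have h13a : ε * (8 * t^2 * (r + t)) ≤ η^2 * r^2 := by
      have h13c := (le_div_iff₀ hBpos).mp hε2
      linarith only [h13c]
    have h13b : (η/2)^2 * r^2 = η^2 * r^2 / 4 := by ring
    linarith only [h13a, h13b]
  have hnormf : ‖pt - cn‖ ≤ η/2 := by
    have ha : 0 ≤ η/2 := by positivity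
    have hsq : ‖pt - cn‖^2 ≤ (η/2)^2 := by
      have h14 := h10 ▸ h9
      linarith only [h14, h11, h12 ▸ h11, h13]
    have hb := Real.sqrt_le_sqrt hsq
    rw [Real.sqrt_sq (norm_nonneg _), Real.sqrt_sq ha] at hb
    exact hb
  have he2 : e ≤ η/2 := by
    have hc : (0:ℝ) < 2 * t := by positivity
    have hd2 : ε * (2*t) ≤ η * r := by
      have hd1 := (le_div_iff₀ hc).mp hε1
      linarith only [hd1]
    have hd3' : (e * 2) * r ≤ η * r := by linarith only [he, hd2]
    have hd4 := le_of_mul_le_mul_right hd3' hr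
    linarith only [hd4]
  have hfin : infDist cn X ≤ infDist pt X + dist cn pt := infDist_le_infDist_add_dist
  have hdcn : dist cn pt = ‖pt - cn‖ := by rw [dist_eq_norm, norm_sub_rev]
  linarith only [h1', hdcn ▸ hfin, hnormf, he2]

theorem stmt_19 {n : ℕ} (X : Set (E n)) (hX : IsClosed X) (hne : X.Nonempty)
    (p q : E n) (hpX : p ∉ X) (hpM : p ∉ medialAxis X)
    (x : E n) (hx : mSet X p = {x})
    (δ ε : ℝ) (hδ : 0 < δ) (hball : Metric.ball p δ ∩ medialAxis X = ∅)
    (hε : dist p q = ε) (hεδ : ε < δ)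
    (horth : (inner ℝ (p - q) (p - x) : ℝ) = 0) :
    mSet X q ⊆
      Metric.closedBall q (Real.sqrt (dist p x ^ 2 + ε ^ 2)) \
        Metric.ball (p + (δ / dist p x) • (p - x)) (δ + dist p x) := by
  have hxmem : x ∈ mSet X p := by rw [hx]; exact Set.mem_singleton x
  have hxX : x ∈ X := hxmem.1
  have hxd : dist p x = infDist p X := hxmem.2
  have hr : 0 < dist p x := by
    rcases (dist_nonneg : (0:ℝ) ≤ dist p x).eq_or_lt with h | h
    · exfalso
      have : p = x := dist_eq_zero.mp h.symm
      exact hpX (this ▸ hxX)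
    · exact h
  intro z hz
  constructor
  · -- the closed ball
    rw [mem_closedBall]
    have h1 : dist q z = infDist q X := hz.2
    have h2 : infDist q X ≤ dist q x := infDist_le_dist_of_mem hxX
    have h3 : dist q x = Real.sqrt (dist p x ^ 2 + ε ^ 2) := by
      have hqx : dist q x ^ 2 = dist p x ^ 2 + ε ^ 2 := by
        rw [dist_eq_norm, dist_eq_norm]
        have hsplit : q - x = (q - p) + (p - x) := by abel
        rw [hsplit, norm_add_sq_real]
        have hio : (inner ℝ (q - p) (p - x) : ℝ) = 0 := by
          have hqp : q - p = -(p - q) := by abel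
          rw [hqp, inner_neg_left, horth, neg_zero]
        rw [hio]
        have hqpe : ‖q - p‖ = ε := by rw [← dist_eq_norm, dist_comm]; exact hε
        rw [hqpe]
        ring
      have h4 := congrArg Real.sqrt hqx
      rwa [Real.sqrt_sq dist_nonneg] at h4
    rw [dist_comm, ← h3]
    linarith
  · -- outside the ball around p_δ
    intro hzball
    rw [mem_ball] at hzball
    set r := dist p x with hrdef
    have hzX : z ∈ X := hz.1
    have hlb : ∀ κ : ℝ, 0 < κ → κ < δ → r + δ - 2*κ ≤ dist z (p + (δ / r) • (p - x)) := by
      intro κ hκ0 hκδ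
      set t := δ - κ with htdef
      have ht0 : 0 < t := by rw [htdef]; linarith
      have htδ : t < δ := by rw [htdef]; linarith
      have hgr := growth X hX hne p x hxX hxd hr δ hball t ht0 htδ
      have hd1 : infDist (p + (t / r) • (p - x)) X ≤ dist (p + (t / r) • (p - x)) z :=
        infDist_le_dist_of_mem hzX
      have htri : dist (p + (t / r) • (p - x)) z ≤
          dist (p + (t / r) • (p - x)) (p + (δ / r) • (p - x)) + dist (p + (δ / r) • (p - x)) z :=
        dist_triangle _ _ _
      have hdist2 : dist (p + (t / r) • (p - x)) (p + (δ / r) • (p - x)) = δ - t := by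
        rw [dist_eq_norm]
        have hveq : (p + (t / r) • (p - x)) - (p + (δ / r) • (p - x))
            = -(((δ - t) / r) • (p - x)) := by
          have h5 : ((δ - t) / r) • (p - x) = (δ / r) • (p - x) - (t / r) • (p - x) := by
            rw [← sub_smul]
            congr 1
            ring
          rw [h5]
          abel
        rw [hveq, norm_neg, norm_smul, Real.norm_eq_abs,
          abs_of_nonneg (div_nonneg (by linarith) hr.le : (0:ℝ) ≤ (δ - t)/r), ← dist_eq_norm, ← hrdef]
        field_simp
      rw [dist_comm z _]
      have : r + t ≤ dist (p + (t / r) • (p - x)) z := le_trans hgr hd1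
      rw [hdist2] at htri
      have ht' : t = δ - κ := htdef
      linarith only [this, htri, ht']
    have hκpos : 0 < min (δ/2) ((δ + r - dist z (p + (δ / r) • (p - x)))/4) := by
      apply lt_min (by positivity)
      have := hzball
      linarith [hzball]
    set κ := min (δ/2) ((δ + r - dist z (p + (δ / r) • (p - x)))/4) with hκdef
    have hκδ : κ < δ := lt_of_le_of_lt (min_le_left _ _) (by linarith)
    have h6 := hlb κ hκpos hκδ
    have h7 : κ ≤ (δ + r - dist z (p + (δ / r) • (p - x)))/4 := min_le_right _ _
    linarith
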